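/- For G = SU(n) with standard maximal torus T (diagonal special unitary matrices) and T' the centralizer of Λ_n in SU(n), the Lie algebras 𝔱 and 𝔱' are orthogonal with respect to the trace form ⟨X,Y⟩ = Re tr(XY). -/

import Mathlib

/-- For `G = SU(n)`, the Lie algebra `𝔱` of the standard maximal torus (traceless
diagonal skew-Hermitian matrices) and the Lie algebra `𝔱'` of the centralizer of
`Λ_n` inside `𝔰𝔲(n)` are orthogonal with respect to the trace form
`⟨X, Y⟩ = Re tr(XY)`. -/
theorem torus_in_apposition_orthogonal
    (n : ℕ) (hn : 2 ≤ n) (C : ℂ)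
    (hC : C ^ n = (-1 : ℂ) ^ (n - 1)) (hCabs : ‖C‖ = 1)
    (Λ : Matrix (Fin n) (Fin n) ℂ)
    (hΛ : Λ = C • (Matrix.single ⟨n - 1, by omega⟩ ⟨0, by omega⟩ 1 +
      ∑ k : Fin (n - 1),
        Matrix.single ⟨k, by omega⟩ ⟨k + 1, by omega⟩ 1))
    (X Y : Matrix (Fin n) (Fin n) ℂ)
    -- X ∈ 𝔱 : diagonal, skew-Hermitian, traceless
    (hXdiag : X.IsDiag) (hXskew : X.conjTranspose = -X) (hXtr : X.trace = 0)
    -- Y ∈ 𝔱' : skew-Hermitian, traceless, commuting with Λ_n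
    (hYskew : Y.conjTranspose = -Y) (hYtr : Y.trace = 0) (hYcomm : Y * Λ = Λ * Y) :
    ((X * Y).trace).re = 0 := by
  haveI : NeZero n := ⟨by omega⟩
  have hC0 : C ≠ 0 := by
    intro h; rw [h] at hCabs; simp at hCabs
  have hone : ((1 : Fin n) : ℕ) = 1 := by
    rw [Fin.val_one' n]; exact Nat.mod_eq_of_lt (by omega)
  -- Entrywise description of Λ : Λ a b = C if b = a + 1 (cyclically), else 0.
  have hΛent : ∀ a b : Fin n, Λ a b = C * (if b = a + 1 then 1 else 0) := by
    intro a b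
    have hsum : (∑ k : Fin (n - 1),
        Matrix.single (⟨k, by omega⟩ : Fin n) (⟨k + 1, by omega⟩ : Fin n) (1:ℂ)) a b
        = if (a.val < n - 1 ∧ b.val = a.val + 1) then 1 else 0 := by
      rw [Matrix.sum_apply]
      by_cases h : a.val < n - 1
      · rw [Finset.sum_eq_single (⟨a.val, h⟩ : Fin (n-1))]
        · simp only [Matrix.single, Matrix.of_apply]
          apply if_congr _ rfl rfl
          simp only [Fin.ext_iff, Fin.val_mk]
          exact ⟨fun hc => ⟨h, hc.2.symm⟩, fun hc => ⟨True.intro, hc.2.symm⟩⟩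
        · intro k _ hk
          simp only [Matrix.single, Matrix.of_apply, ite_eq_right_iff]
          intro hc
          have hv := congrArg Fin.val hc.1
          exact absurd (show k = ⟨a.val, h⟩ from Fin.ext hv) hk
        · intro hmem; exact absurd (Finset.mem_univ _) hmem
      · rw [if_neg (fun hc => h hc.1)]
        apply Finset.sum_eq_zero
        intro k _
        simp only [Matrix.single, Matrix.of_apply, ite_eq_right_iff]
        intro hc
        exfalso
        have h1 : (k : ℕ) = a.val := Fin.ext_iff.mp hc.1
        have h2 : (k : ℕ) < n - 1 := k.isLt
        omega
    have hfirst : (Matrix.single (⟨n - 1, by omega⟩ : Fin n) (⟨0, by omega⟩ : Fin n)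
        (1:ℂ)) a b = if (a.val = n - 1 ∧ b.val = 0) then 1 else 0 := by
      simp only [Matrix.single, Matrix.of_apply]
      apply if_congr _ rfl rfl
      simp only [Fin.ext_iff, Fin.val_mk]
      omega
    have hadd1 : (a + 1 : Fin n).val = (a.val + 1) % n := by
      rw [Fin.add_def, hone]
    have hbeq : (b = a + 1) ↔ b.val = (a.val + 1) % n := by
      rw [Fin.ext_iff, hadd1]
    rw [hΛ]
    simp only [Matrix.smul_apply, Matrix.add_apply, hsum, hfirst, smul_eq_mul]
    congr 1
    by_cases h : a.val < n - 1
    · have hmod : (a.val + 1) % n = a.val + 1 := Nat.mod_eq_of_lt (by omega)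
      have hno : ¬(a.val = n - 1 ∧ b.val = 0) := by omega
      rw [if_neg hno, zero_add]
      apply if_congr _ rfl rfl
      rw [hbeq, hmod]
      constructor
      · exact fun hc => hc.2
      · exact fun hc => ⟨h, hc⟩
    · have ha : a.val = n - 1 := by have := a.isLt; omega
      have hmod : (a.val + 1) % n = 0 := by
        rw [ha, Nat.sub_add_cancel (by omega), Nat.mod_self]
      have hno : ¬(a.val < n - 1 ∧ b.val = a.val + 1) := fun hc => h hc.1
      rw [if_neg hno, add_zero]
      apply if_congr _ rfl rfl
      rw [hbeq, hmod]
      constructor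
      · exact fun hc => hc.2
      · exact fun hc => ⟨ha, hc⟩
  -- Diagonal entries of Y are constant along the cycle: Y (i+1) (i+1) = Y i i.
  have key : ∀ i : Fin n, Y (i + 1) (i + 1) = Y i i := by
    intro i
    have h1 := congrFun (congrFun hYcomm i) (i + 1)
    have hYL : (Y * Λ) i (i + 1) = C * Y i i := by
      rw [Matrix.mul_apply]
      have heach : ∀ m : Fin n, Y i m * Λ m (i + 1) = if m = i then C * Y i i else 0 := by
        intro m
        rw [hΛent]
        by_cases hm : m = i
        · subst hm; rw [if_pos rfl, if_pos rfl]; ring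
        · rw [if_neg hm, if_neg, mul_zero, mul_zero]
          intro h
          exact hm (add_right_cancel h).symm
      simp only [heach]
      simp
    have hLY : (Λ * Y) i (i + 1) = C * Y (i + 1) (i + 1) := by
      rw [Matrix.mul_apply]
      have heach : ∀ m : Fin n, Λ i m * Y m (i + 1) =
          if m = i + 1 then C * Y (i + 1) (i + 1) else 0 := by
        intro m
        rw [hΛent]
        by_cases hm : m = i + 1
        · subst hm; rw [if_pos rfl, if_pos rfl]; ring
        · rw [if_neg hm, if_neg hm, mul_zero, zero_mul]
      simp only [heach]
      simp
    rw [hYL, hLY] at h1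
    exact (mul_left_cancel₀ hC0 h1).symm
  -- All diagonal entries of Y equal Y 0 0.
  open Fin.NatCast in
  have diagconst : ∀ i : Fin n, Y i i = Y 0 0 := by
    have hnat : ∀ m : ℕ, Y ((m : Fin n)) ((m : Fin n)) = Y 0 0 := by
      intro m
      induction m with
      | zero => simp
      | succ k ih =>
        have hcast : ((k + 1 : ℕ) : Fin n) = ((k : ℕ) : Fin n) + 1 := by push_cast; ring
        rw [hcast, key, ih]
    intro i
    have := hnat i.val
    rwa [Fin.cast_val_eq_self] at this
  -- Hence Y 0 0 = 0 and all diagonal entries vanish.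
  have hY00 : Y 0 0 = 0 := by
    have htr : Y.trace = (n : ℂ) * Y 0 0 := by
      rw [Matrix.trace]
      simp only [Matrix.diag]
      rw [Finset.sum_congr rfl (fun i _ => diagconst i)]
      simp [mul_comm]
    rw [hYtr] at htr
    have hn0 : (n : ℂ) ≠ 0 := Nat.cast_ne_zero.mpr (by omega)
    exact (mul_eq_zero.mp htr.symm).resolve_left hn0
  have hYdiag : ∀ i : Fin n, Y i i = 0 := fun i => (diagconst i).trans hY00
  -- Finally compute the trace of X * Y.
  have htr : (X * Y).trace = 0 := by
    rw [Matrix.trace]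
    apply Finset.sum_eq_zero
    intro i _
    simp only [Matrix.diag, Matrix.mul_apply]
    apply Finset.sum_eq_zero
    intro k _
    by_cases hk : k = i
    · subst hk; rw [hYdiag, mul_zero]
    · rw [hXdiag (fun h => hk h.symm), zero_mul]
  rw [htr, Complex.zero_re]
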